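/- There exists a finite group G of order 16 that has a basis and that contains a normal subgroup isomorphic to the quaternion group Q8. (Hence a group with a basisless normal subgroup can itself have a basis.) -/

import Mathlib

set_option maxHeartbeats 4000000

/-- A sequence `b : Fin n → G` of non-identity elements is a *basis* for the group `G`
if every `g ∈ G` is uniquely of the form `b 0 ^ a 0 * ⋯ * b (n-1) ^ a (n-1)`
with `a i ∈ {0, …, orderOf (b i) - 1}`. -/
def IsGroupBasis {G : Type*} [Group G] {n : ℕ} (b : Fin n → G) : Prop :=
  (∀ i, b i ≠ 1) ∧
    Function.Bijective (fun a : ∀ i, Fin (orderOf (b i)) =>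
      (List.ofFn fun i => b i ^ ((a i : ℕ))).prod)

/-- `G` has a basis. -/
def HasGroupBasis (G : Type*) [Group G] : Prop :=
  ∃ (n : ℕ) (b : Fin n → G), IsGroupBasis b

/-- The central product `Q₈ ∘ C₄`, realized on the carrier `Q₈ × Bool`:
the element `(q, e)` represents `q·ωᵉ` where `ω` is a central element with `ω² = -1`. -/
def Gq : Type := QuaternionGroup 2 × Bool

namespace Gq

instance : DecidableEq Gq := inferInstanceAs (DecidableEq (QuaternionGroup 2 × Bool))
instance : Fintype Gq := inferInstanceAs (Fintype (QuaternionGroup 2 × Bool))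

/-- the central element `-1` of `Q₈`. -/
def z : QuaternionGroup 2 := QuaternionGroup.a 2

instance : Mul Gq :=
  ⟨fun x y => (x.1 * y.1 * (if x.2 && y.2 then z else 1), xor x.2 y.2)⟩
instance : One Gq := ⟨(1, false)⟩
instance : Inv Gq := ⟨fun x => (x.1⁻¹ * (if x.2 then z else 1), x.2)⟩

instance instGroup : Group Gq where
  mul_assoc := by decide
  one_mul := by decide
  mul_one := by decide
  inv_mul_cancel := by decide

def b1 : Gq := (QuaternionGroup.a 1, false)
def b2 : Gq := (QuaternionGroup.xa 0, true)
def b3 : Gq := (QuaternionGroup.a 1, true)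

lemma orderOf_b1 : orderOf b1 = 4 := by
  rw [orderOf_eq_iff (by norm_num)]
  exact ⟨by decide, by decide⟩

lemma orderOf_b2 : orderOf b2 = 2 := by
  rw [orderOf_eq_iff (by norm_num)]
  exact ⟨by decide, by decide⟩

lemma orderOf_b3 : orderOf b3 = 2 := by
  rw [orderOf_eq_iff (by norm_num)]
  exact ⟨by decide, by decide⟩

/-- The subgroup `Q₈ × {false}`. -/
def N : Subgroup Gq where
  carrier := {x | x.2 = false}
  mul_mem' := by rintro ⟨a, b⟩ ⟨c, d⟩ hx hy
                 simp only [Set.mem_setOf_eq] at *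
                 subst hx; subst hy; rfl
  one_mem' := rfl
  inv_mem' := by rintro ⟨a, b⟩ hx; exact hx

lemma mem_N {x : Gq} : x ∈ N ↔ x.2 = false := Iff.rfl

lemma snd_mul (x y : Gq) : (x * y).2 = xor x.2 y.2 := rfl

instance : N.Normal := by
  constructor
  intro x hx g
  rw [mem_N] at *
  show (xor (xor g.2 x.2) g.2) = false
  rw [hx]
  cases g.2 <;> rfl

def NtoQ8 : N ≃* QuaternionGroup 2 where
  toFun x := x.1.1
  invFun q := ⟨(q, false), rfl⟩
  left_inv := by
    rintro ⟨⟨q, e⟩, he⟩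
    have : e = false := he
    subst this; rfl
  right_inv := fun q => rfl
  map_mul' := by
    rintro ⟨⟨q, e⟩, he⟩ ⟨⟨q', e'⟩, he'⟩
    have h1 : e = false := he
    have h2 : e' = false := he'
    subst h1; subst h2
    show q * q' * (if false && false then z else 1) = q * q'
    simp

end Gq

/-- There is a finite group of order `16` that has a basis and contains a normal
subgroup isomorphic to the quaternion group `Q₈`. -/
theorem exists_hasGroupBasis_with_normal_quaternion_subgroup :
    ∃ (G : Type) (_ : Group G) (_ : Finite G),
      Nat.card G = 16 ∧ HasGroupBasis G ∧
        ∃ N : Subgroup G, N.Normal ∧ Nonempty (N ≃* QuaternionGroup 2) := by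
  refine ⟨Gq, inferInstance, Finite.of_fintype _, ?_, ?_, Gq.N, inferInstance, ⟨Gq.NtoQ8⟩⟩
  · rw [Nat.card_eq_fintype_card]; rfl
  · refine ⟨3, ![Gq.b1, Gq.b2, Gq.b3], by decide, ?_⟩
    have h : ∀ i : Fin 3, orderOf (![Gq.b1, Gq.b2, Gq.b3] i) = ![4, 2, 2] i := by
      intro i
      fin_cases i
      · exact Gq.orderOf_b1
      · exact Gq.orderOf_b2
      · exact Gq.orderOf_b3
    have key : Function.Bijective (fun a : ∀ i : Fin 3, Fin (![4, 2, 2] i) =>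
        (List.ofFn fun i => ![Gq.b1, Gq.b2, Gq.b3] i ^ ((a i : ℕ))).prod) := by decide
    have heq : (fun a : ∀ i, Fin (orderOf (![Gq.b1, Gq.b2, Gq.b3] i)) =>
        (List.ofFn fun i => ![Gq.b1, Gq.b2, Gq.b3] i ^ ((a i : ℕ))).prod) =
        (fun a : ∀ i : Fin 3, Fin (![4, 2, 2] i) =>
        (List.ofFn fun i => ![Gq.b1, Gq.b2, Gq.b3] i ^ ((a i : ℕ))).prod) ∘
        (Equiv.piCongrRight fun i => finCongr (h i)) := by
      funext a
      simp [Equiv.piCongrRight, finCongr]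
      rfl
    rw [heq]
    exact key.comp (Equiv.piCongrRight fun i => finCongr (h i)).bijective
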